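/- Let x, y be strings of length n over an alphabet with d_H(x,y) ≤ t, let s ≤ n, and suppose indices 0 ≤ i < j ≤ n−s satisfy j − i ≤ s − t and y_{i+[s]} = y_{j+[s]}. Then d_H(x_{i+[s]}, x_{j+[s]}) ≤ 2t. -/

import Mathlib

/-- The length-`s` substring of `x` starting at index `i`. -/
def substr {α : Type*} (x : ℕ → α) (i s : ℕ) : Fin s → α := fun k => x (i + k)

/-- Hamming distance between the length-`n` prefixes of `x` and `y`. -/
def dH {α : Type*} [DecidableEq α] (x y : ℕ → α) (n : ℕ) : ℕ :=
  ((Finset.range n).filter (fun i => x i ≠ y i)).card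

/-- if `d_H(x,y) ≤ t` and two windows of `y` at distance `j - i ≤ s - t`
coincide, then the corresponding windows of `x` are at Hamming distance at most `2t`. -/
theorem stmt2 {α : Type*} [DecidableEq α] (n t s i j : ℕ) (hs : s ≤ n)
    (x y : ℕ → α) (hxy : dH x y n ≤ t)
    (hij : i < j) (hjn : j + s ≤ n) (hclose : j - i + t ≤ s)
    (heq : substr y i s = substr y j s) :
    hammingDist (substr x i s) (substr x j s) ≤ 2 * t := by
  classical
  have h1 : ∀ a : ℕ, a + s ≤ n →
      (Finset.univ.filter (fun k : Fin s => x (a + k) ≠ y (a + k))).card ≤ t := by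
    intro a ha
    refine le_trans ?_ hxy
    unfold dH
    refine Finset.card_le_card_of_injOn (fun k => a + (k : ℕ)) ?_ ?_
    · intro k hk
      simp only [Finset.mem_coe, Finset.mem_filter, Finset.mem_univ, true_and, Finset.mem_range] at hk ⊢
      exact ⟨lt_of_lt_of_le (Nat.add_lt_add_left k.2 a) ha, hk⟩
    · intro k _ k' _ h
      exact Fin.ext (Nat.add_left_cancel h)
  have hy : ∀ k : Fin s, y (i + k) = y (j + k) := fun k => congrFun heq k
  have hsub : (Finset.univ.filter (fun k : Fin s => substr x i s k ≠ substr x j s k)) ⊆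
      (Finset.univ.filter (fun k : Fin s => x (i + k) ≠ y (i + k))) ∪
      (Finset.univ.filter (fun k : Fin s => x (j + k) ≠ y (j + k))) := by
    intro k hk
    simp only [Finset.mem_filter, Finset.mem_union, Finset.mem_univ, true_and, substr] at hk ⊢
    by_contra h
    push_neg at h
    exact (Finset.mem_filter.mp hk).2 (h.1.trans ((hy k).trans h.2.symm))
  have hdist : hammingDist (substr x i s) (substr x j s) =
      (Finset.univ.filter (fun k : Fin s => substr x i s k ≠ substr x j s k)).card := rfl
  rw [hdist]
  calc _ ≤ _ := Finset.card_le_card hsub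
    _ ≤ _ + _ := Finset.card_union_le _ _
    _ ≤ t + t := Nat.add_le_add (h1 i (le_trans (Nat.add_le_add_right hij.le s) hjn)) (h1 j hjn)
    _ = 2 * t := (Nat.two_mul t).symm
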